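/- Counting bound for resonant frequency boxes: fix k with |k| ≥ 2^β and σ ∈ ℝ, and let E be a union of N intervals each of length ≤ L. Then the set of integers k′ such that k′² − kk′ ∈ (1/3)(−σ/k − k² + 2^{−β}E) is contained in at most 2N intervals, each of length O((L·2^{−β})^{1/2}). -/
import Mathlib


open scoped Real BigOperators Classical
open Complex MeasureTheory

noncomputable section

/-- Japanese bracket `⟨x⟩ = (1+x²)^{1/2}`. -/
def jb (x : ℝ) : ℝ := Real.sqrt (1 + x ^ 2)

/-- `d_τ(σ) = (e^{iτσ} − 1)/τ`. -/
def dTau (τ σ : ℝ) : ℂ := (Complex.exp (Complex.I * (τ : ℂ) * (σ : ℂ)) - 1) / (τ : ℂ)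

/-- Discrete space-time Fourier transform of a sequence `n ↦ (k ↦ û^n(k))` of
Fourier-coefficient functions: `ũ(σ,k) = τ ∑_m û^m(k) e^{imτσ}`. -/
def dFT (τ : ℝ) (u : ℤ → ℤ → ℂ) (σ : ℝ) (k : ℤ) : ℂ :=
  (τ : ℂ) * ∑' m : ℤ, u m k * Complex.exp (Complex.I * (m : ℂ) * (τ : ℂ) * (σ : ℂ))

/-- Discrete Bourgain norm `‖u‖_{X^{s,b}_τ} = ‖⟨k⟩^s ⟨d_τ(σ+k³)⟩^b ũ(σ,k)‖_{L²(σ) ℓ²(k)}`,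
with `σ ∈ [−π/τ, π/τ]`. -/
def XNorm (τ s b : ℝ) (u : ℤ → ℤ → ℂ) : ℝ :=
  (∫ σ in Set.Ioc (-(π / τ)) (π / τ),
      ∑' k : ℤ, jb (k : ℝ) ^ (2 * s) * jb ‖dTau τ (σ + (k : ℝ) ^ 3)‖ ^ (2 * b) *
        ‖dFT τ u σ k‖ ^ 2) ^ ((1 : ℝ) / 2)

/-- Sobolev norm on Fourier coefficients: `‖f‖_{H^s}² = ∑_k ⟨k⟩^{2s} |f̂(k)|²`. -/
def HsNorm (s : ℝ) (f : ℤ → ℂ) : ℝ :=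
  (∑' k : ℤ, jb (k : ℝ) ^ (2 * s) * ‖f k‖ ^ 2) ^ ((1 : ℝ) / 2)

/-- Frequency truncation `Π_τ` to `|k| ≤ τ^{-1/3}`, acting on Fourier coefficients. -/
def PiCoef (τ : ℝ) (f : ℤ → ℂ) : ℤ → ℂ :=
  fun k => if |(k : ℝ)| ≤ τ ^ (-(1 : ℝ) / 3) then f k else 0

/-- `Π_τ` acting on a sequence of Fourier-coefficient functions. -/
def PiT (τ : ℝ) (u : ℤ → ℤ → ℂ) : ℤ → ℤ → ℂ := fun n => PiCoef τ (u n)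

/-- Fourier inversion formula for the discrete space-time Fourier transform; it encodes
that `(u^n)_n` genuinely belongs to the relevant discrete Bourgain class. -/
def InvOK (τ : ℝ) (u : ℤ → ℤ → ℂ) : Prop :=
  ∀ m k : ℤ, u m k = ((1 / (2 * π) : ℝ) : ℂ) *
    ∫ σ in Set.Ioc (-(π / τ)) (π / τ),
      dFT τ u σ k * Complex.exp (-(Complex.I * (m : ℂ) * (τ : ℂ) * (σ : ℂ)))

/-- `ℓ²(k) L¹(σ)` norm with weight `⟨k⟩^s`. -/
def L2L1 (τ s : ℝ) (u : ℤ → ℤ → ℂ) : ℝ :=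
  (∑' k : ℤ, (∫ σ in Set.Ioc (-(π / τ)) (π / τ), jb (k : ℝ) ^ s * ‖dFT τ u σ k‖) ^ 2) ^
    ((1 : ℝ) / 2)

/-- `‖u‖_{X^s_τ} = ‖u‖_{X^{s,1/2}_τ} + ‖⟨k⟩^s ũ‖_{ℓ²(k)L¹(σ)}`. -/
def XsNorm (τ s : ℝ) (u : ℤ → ℤ → ℂ) : ℝ := XNorm τ s (1 / 2) u + L2L1 τ s u

/-- `‖F‖_{Y^s_τ} = ‖F‖_{X^{s,−1/2}_τ} + ‖⟨k⟩^s ⟨d_τ(σ+k³)⟩^{−1} F̃‖_{ℓ²(k)L¹(σ)}`. -/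
def YNorm (τ s : ℝ) (u : ℤ → ℤ → ℂ) : ℝ :=
  XNorm τ s (-(1 / 2)) u +
    (∑' k : ℤ, (∫ σ in Set.Ioc (-(π / τ)) (π / τ),
        jb (k : ℝ) ^ s * ‖dFT τ u σ k‖ / jb ‖dTau τ (σ + (k : ℝ) ^ 3)‖) ^ 2) ^ ((1 : ℝ) / 2)

/-- The function on the torus with Fourier coefficients `c`. -/
def phys (c : ℤ → ℂ) (x : ℝ) : ℂ := ∑' k : ℤ, c k * Complex.exp (Complex.I * (k : ℂ) * (x : ℂ))

private lemma sqrt_sub_le_sqrt_sub (x y : ℝ) (hx : 0 ≤ x) :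
    Real.sqrt y - Real.sqrt x ≤ Real.sqrt (y - x) := by
  rcases le_or_gt y x with h | h
  · have h1 := Real.sqrt_le_sqrt h
    have h2 := Real.sqrt_nonneg (y - x)
    linarith
  · have hyx : (0:ℝ) ≤ y - x := by linarith
    have h2 : y ≤ (Real.sqrt (y - x) + Real.sqrt x) ^ 2 := by
      have a1 := Real.sq_sqrt hyx
      have a2 := Real.sq_sqrt hx
      nlinarith [Real.sqrt_nonneg (y - x), Real.sqrt_nonneg x]
    have h3 : Real.sqrt y ≤ Real.sqrt (y - x) + Real.sqrt x := by
      calc Real.sqrt y ≤ Real.sqrt ((Real.sqrt (y - x) + Real.sqrt x) ^ 2) :=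
            Real.sqrt_le_sqrt h2
        _ = Real.sqrt (y - x) + Real.sqrt x := Real.sqrt_sq (by positivity)
    linarith

/-- counting bound for resonant frequency boxes: if `|k| ≥ 2^β` and `E` is a
union of `N` intervals each of length `≤ L`, then the set of integers `k′` with
`k′² − kk′ ∈ (1/3)(−σ/k − k² + 2^{−β}E)` is contained in at most `2N` intervals, each of
length `O((L·2^{−β})^{1/2})`. -/
theorem resonant_box_counting :
    ∃ C : ℝ, 0 < C ∧
      ∀ (β : ℝ) (k : ℤ) (σ L : ℝ) (N : ℕ) (a b : Fin N → ℝ),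
        0 ≤ L → (2 : ℝ) ^ β ≤ |(k : ℝ)| → (∀ i, b i - a i ≤ L) →
          ∃ c d : Fin (2 * N) → ℝ,
            (∀ j, d j - c j ≤ C * (L * (2 : ℝ) ^ (-β)) ^ ((1 : ℝ) / 2)) ∧
              ∀ k' : ℤ,
                ((k' : ℝ) ^ 2 - (k : ℝ) * (k' : ℝ)) ∈
                    (fun y => (1 / 3) * (-σ / (k : ℝ) - (k : ℝ) ^ 2 + (2 : ℝ) ^ (-β) * y)) ''
                      (⋃ i, Set.Icc (a i) (b i)) →
                  ∃ j, (k' : ℝ) ∈ Set.Icc (c j) (d j) := by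
  refine ⟨1, one_pos, ?_⟩
  intro β k σ L N a b hL hk hba
  set K : ℝ := (k : ℝ) with hK
  set p : ℝ := (2:ℝ) ^ (-β) with hp
  have hp0 : 0 < p := Real.rpow_pos_of_pos two_pos _
  set m : Fin N → ℝ := fun i => 1 / 3 * (-σ / K - K ^ 2 + p * a i) + K ^ 2 / 4 with hm
  set M : Fin N → ℝ := fun i => 1 / 3 * (-σ / K - K ^ 2 + p * b i) + K ^ 2 / 4 with hM
  clear_value K p m M
  have hMm : ∀ i, M i - m i ≤ L * p := by
    intro i
    have h1 : M i - m i = 1 / 3 * p * (b i - a i) := by simp only [hm, hM]; ring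
    have h2 := hba i
    have h3 : p * (b i - a i) ≤ p * L := mul_le_mul_of_nonneg_left h2 hp0.le
    nlinarith [mul_nonneg hp0.le hL]
  refine ⟨fun j => if h : (j : ℕ) < N then K / 2 + Real.sqrt (max (m ⟨j, h⟩) 0)
      else K / 2 - Real.sqrt (max (M ⟨(j : ℕ) - N, by have := j.isLt; omega⟩) 0),
    fun j => if h : (j : ℕ) < N then K / 2 + Real.sqrt (max (M ⟨j, h⟩) 0)
      else K / 2 - Real.sqrt (max (m ⟨(j : ℕ) - N, by have := j.isLt; omega⟩) 0), ?_, ?_⟩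
  · intro j
    have key : ∀ i : Fin N, Real.sqrt (max (M i) 0) - Real.sqrt (max (m i) 0) ≤
        Real.sqrt (L * p) := by
      intro i
      have h1 : max (M i) 0 - max (m i) 0 ≤ L * p := by
        have hMm' := hMm i
        have hLp : 0 ≤ L * p := mul_nonneg hL hp0.le
        rcases le_total (M i) 0 with h | h
        · rw [max_eq_right h]
          have := le_max_right (m i) (0:ℝ)
          linarith
        · rw [max_eq_left h]
          rcases le_total (m i) 0 with h' | h'
          · rw [max_eq_right h']
            linarith
          · rw [max_eq_left h']
            linarith
      calc Real.sqrt (max (M i) 0) - Real.sqrt (max (m i) 0)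
          ≤ Real.sqrt (max (M i) 0 - max (m i) 0) :=
            sqrt_sub_le_sqrt_sub _ _ (le_max_right _ _)
        _ ≤ Real.sqrt (L * p) := Real.sqrt_le_sqrt h1
    have hrw : (1:ℝ) * (L * p) ^ ((1:ℝ) / 2) = Real.sqrt (L * p) := by
      rw [one_mul, Real.sqrt_eq_rpow]
    rw [hrw]
    by_cases h : (j : ℕ) < N
    · simp only [dif_pos h]
      have := key ⟨j, h⟩; linarith
    · simp only [dif_neg h]
      have := key ⟨(j : ℕ) - N, by have := j.isLt; omega⟩; linarith
  · intro k' hmem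
    obtain ⟨y, hy, hfy⟩ := hmem
    obtain ⟨i, hi⟩ := Set.mem_iUnion.mp hy
    set t : ℝ := (k' : ℝ) - K / 2 with ht
    have hsq : t ^ 2 = ((k' : ℝ) ^ 2 - K * (k' : ℝ)) + K ^ 2 / 4 := by rw [ht]; ring
    clear_value t
    have htm : m i ≤ t ^ 2 := by
      rw [hsq, ← hfy]
      simp only [hm]
      have := hi.1
      nlinarith [hp0]
    have htM : t ^ 2 ≤ M i := by
      rw [hsq, ← hfy]
      simp only [hM]
      have := hi.2
      nlinarith [hp0]
    have htm' : max (m i) 0 ≤ t ^ 2 := by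
      rcases le_total (m i) 0 with h | h
      · simp [max_eq_right h]; positivity
      · simpa [max_eq_left h] using htm
    have htM' : t ^ 2 ≤ max (M i) 0 := le_trans htM (le_max_left _ _)
    have habs1 : Real.sqrt (max (m i) 0) ≤ |t| := by
      have := Real.sqrt_le_sqrt htm'
      rwa [Real.sqrt_sq_eq_abs] at this
    have habs2 : |t| ≤ Real.sqrt (max (M i) 0) := by
      have := Real.sqrt_le_sqrt htM'
      rwa [Real.sqrt_sq_eq_abs] at this
    rcases le_total 0 t with hts | hts
    · refine ⟨⟨i, by have := i.isLt; omega⟩, ?_⟩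
      have hlt : ((⟨i, by have := i.isLt; omega⟩ : Fin (2 * N)) : ℕ) < N := i.isLt
      simp only [dif_pos hlt, Fin.eta]
      rw [_root_.abs_of_nonneg hts] at habs1 habs2
      rw [Set.mem_Icc]
      constructor <;> linarith [ht, habs1, habs2]
    · refine ⟨⟨i + N, by have := i.isLt; omega⟩, ?_⟩
      have hlt : ¬ ((⟨i + N, by have := i.isLt; omega⟩ : Fin (2 * N)) : ℕ) < N := by
        simp only [Fin.val_mk]; omega
      simp only [dif_neg hlt]
      rw [_root_.abs_of_nonpos hts] at habs1 habs2
      have hieq : ((i : ℕ) + N - N) = (i : ℕ) := by omega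
      simp only [hieq, Fin.eta]
      rw [Set.mem_Icc]
      constructor <;> linarith [ht, habs1, habs2]
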